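/- Let μ = (μ_1,…,μ_m) be an m-partition of n, and let F ∈ ℂ[x] have degree n, exactly m distinct complex roots, and roots α_1,…,α_n listed with multiplicity. Then mult(F) = μ if and only if the permanent of the n×n matrix whose (i,j)-entry is F^{(p_i)}(α_j)/p_i! is nonzero. -/

import Mathlib

open Polynomial Finset Equiv

/-- The `n`-tuple `p = (μ_1 repeated μ_1 times, …, μ_m repeated μ_m times)`
associated with an `m`-partition `μ` of `n`. -/
def pTuple {m : ℕ} (μ : Fin m → ℕ) (n : ℕ) : Fin n → ℕ := fun i =>
  ((List.ofFn μ).flatMap fun a => List.replicate a a).getD (i : ℕ) 0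

/-- `mult F = μ`: the multiset of multiplicities of the distinct roots of `F` equals the
multiset of entries of `μ` (equivalently, since `μ_1 ≥ … ≥ μ_m`, the tuple of
multiplicities sorted in decreasing order is `(μ_1, …, μ_m)`). -/
def multEq {m : ℕ} (F : Polynomial ℂ) (μ : Fin m → ℕ) : Prop :=
  (F.roots.toFinset.val.map fun r => rootMultiplicity r F) = Finset.univ.val.map μ

/-! ### Auxiliary lemmas -/

lemma aux_sum_comm {ι : Type*} (s : Finset ι) (X : Multiset ℕ) (f : ι → ℕ → ℚ) :
    ∑ v ∈ s, (X.map (f v)).sum = (X.map fun a => ∑ v ∈ s, f v a).sum := by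
  induction X using Multiset.induction_on with
  | empty => simp
  | cons a X ih => simp [ih, Finset.sum_add_distrib]

lemma aux_telescope (a : ℕ) (ha : 1 ≤ a) :
    ∀ N, a ≤ N →
      ∑ v ∈ Finset.Icc a N, ((v : ℚ) * ((v : ℚ) + 1))⁻¹ = (a : ℚ)⁻¹ - ((N : ℚ) + 1)⁻¹ := by
  refine Nat.le_induction ?_ ?_
  · rw [Finset.Icc_self, Finset.sum_singleton]
    have h1 : (a : ℚ) ≠ 0 := Nat.cast_ne_zero.mpr (by omega)
    have h2 : (a : ℚ) + 1 ≠ 0 := by positivity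
    field_simp
    ring
  · intro N hN ih
    rw [Finset.sum_Icc_succ_top (by omega), ih]
    have h1 : (N : ℚ) + 1 ≠ 0 := by positivity
    have h2 : (N : ℚ) + 2 ≠ 0 := by positivity
    have h3 : (a : ℚ) ≠ 0 := Nat.cast_ne_zero.mpr (by omega)
    push_cast
    field_simp
    ring

lemma aux_cast_sum (X : Multiset ℕ) (f : ℕ → ℕ) :
    (((X.map f).sum : ℕ) : ℚ) = (X.map fun a => ((f a : ℕ) : ℚ)).sum := by
  induction X using Multiset.induction_on with
  | empty => simp
  | cons b X ih => simp [ih]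

lemma aux_linear (X : Multiset ℕ) (c d : ℚ) :
    (X.map fun a : ℕ => c - (a : ℚ) * d).sum
      = (Multiset.card X : ℚ) * c - (X.sum : ℚ) * d := by
  induction X using Multiset.induction_on with
  | empty => simp
  | cons b X ih =>
    simp only [Multiset.map_cons, Multiset.sum_cons, Multiset.card_cons, ih]
    push_cast
    ring

lemma aux_split (X : Multiset ℕ) (v : ℕ) :
    (X.map fun a => if a ≤ v then a else 0).sum
      + (X.map fun a => if v + 1 ≤ a then a else 0).sum = X.sum := by
  induction X using Multiset.induction_on with
  | empty => simp
  | cons b X ih =>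
    simp only [Multiset.map_cons, Multiset.sum_cons]
    split_ifs <;> omega

lemma aux_step (X : Multiset ℕ) (v : ℕ) :
    (X.map fun a => if a ≤ v + 1 then a else 0).sum
      = (X.map fun a => if a ≤ v then a else 0).sum + (v + 1) * X.count (v + 1) := by
  induction X using Multiset.induction_on with
  | empty => simp
  | cons b X ih =>
    simp only [Multiset.map_cons, Multiset.sum_cons, Multiset.count_cons, ih]
    by_cases h : v + 1 = b
    · rw [if_pos (by omega : b ≤ v + 1), if_neg (by omega : ¬ b ≤ v), if_pos h, mul_add, mul_one]
      omega
    · rw [if_neg h, mul_add, mul_zero, add_zero]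
      have he : (if b ≤ v + 1 then b else 0) = (if b ≤ v then b else 0) := by
        split_ifs <;> omega
      rw [he]
      omega

lemma aux_le_sum {X : Multiset ℕ} {a : ℕ} (h : a ∈ X) : a ≤ X.sum := by
  obtain ⟨t, rfl⟩ := Multiset.exists_cons_of_mem h
  rw [Multiset.sum_cons]
  omega

lemma aux_countP_replicate (p : ℕ → Prop) [DecidablePred p] (k b : ℕ) :
    Multiset.countP p (Multiset.replicate k b) = if p b then k else 0 := by
  induction k with
  | zero => simp
  | succ k ih =>
    rw [Multiset.replicate_succ, Multiset.countP_cons, ih]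
    split_ifs <;> omega

lemma aux_countP_bind (v : ℕ) (X : Multiset ℕ) :
    Multiset.countP (fun x => v ≤ x) (X.bind fun a => Multiset.replicate a a)
      = (X.map fun a => if v ≤ a then a else 0).sum := by
  induction X using Multiset.induction_on with
  | empty => simp
  | cons b X ih =>
    rw [Multiset.cons_bind, Multiset.countP_add, ih, Multiset.map_cons, Multiset.sum_cons,
      aux_countP_replicate]

lemma aux_card_bind {k : ℕ} (v : ℕ) (f : Fin k → ℕ) (X : Multiset ℕ)
    (hX : Finset.univ.val.map f = X.bind fun a => Multiset.replicate a a) :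
    (X.map fun a => if v ≤ a then a else 0).sum
      = (Finset.univ.filter fun j => v ≤ f j).card := by
  classical
  rw [← aux_countP_bind, ← hX, Multiset.countP_map, Finset.card_def, Finset.filter_val]

/-- The key combinatorial lemma: if `A` and `B` are multisets of positive integers with the
same cardinality and the same sum, and for each `v` the sum of the elements of `B` that are
`≥ v` is at most the corresponding sum for `A`, then `A = B`. -/
lemma aux_key (A B : Multiset ℕ)
    (hA : ∀ a ∈ A, 1 ≤ a) (hB : ∀ b ∈ B, 1 ≤ b)
    (hcard : Multiset.card A = Multiset.card B) (hsum : A.sum = B.sum)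
    (hdom : ∀ v : ℕ, (B.map fun a => if v ≤ a then a else 0).sum
        ≤ (A.map fun a => if v ≤ a then a else 0).sum) :
    A = B := by
  set N := A.sum with hN
  have hBsum : B.sum = N := hsum.symm
  -- the small-part sum functions
  set t : Multiset ℕ → ℕ → ℕ := fun X v => (X.map fun a => if a ≤ v then a else 0).sum with ht
  have hdom' : ∀ v, t A v ≤ t B v := by
    intro v
    have h1 := aux_split A v
    have h2 := aux_split B v
    have h3 := hdom (v + 1)
    simp only [ht]
    omega
  -- the weighted-sum identity
  have hw : ∀ X : Multiset ℕ, (∀ a ∈ X, 1 ≤ a) → X.sum = N →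
      ∑ v ∈ Finset.Icc 1 N, ((v : ℚ) * ((v : ℚ) + 1))⁻¹ * (t X v : ℚ)
        = (Multiset.card X : ℚ) - (X.sum : ℚ) * ((N : ℚ) + 1)⁻¹ := by
    intro X hX1 hXs
    have hstep1 : ∀ v ∈ Finset.Icc 1 N, ((v : ℚ) * ((v : ℚ) + 1))⁻¹ * (t X v : ℚ)
        = (X.map fun a => if a ≤ v then ((v : ℚ) * ((v : ℚ) + 1))⁻¹ * (a : ℚ) else 0).sum := by
      intro v _
      simp only [ht]
      rw [aux_cast_sum, ← Multiset.sum_map_mul_left]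
      congr 1
      apply Multiset.map_congr rfl
      intro a _
      split_ifs <;> simp
    rw [Finset.sum_congr rfl hstep1, aux_sum_comm]
    have hinner : ∀ a ∈ X,
        (∑ v ∈ Finset.Icc 1 N, if a ≤ v then ((v : ℚ) * ((v : ℚ) + 1))⁻¹ * (a : ℚ) else 0)
          = 1 - (a : ℚ) * ((N : ℚ) + 1)⁻¹ := by
      intro a haX
      have ha1 : 1 ≤ a := hX1 a haX
      have haN : a ≤ N := by
        have := aux_le_sum haX
        omega
      rw [← Finset.sum_filter]
      have hfil : (Finset.Icc 1 N).filter (fun v => a ≤ v) = Finset.Icc a N := by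
        ext v
        simp only [Finset.mem_filter, Finset.mem_Icc]
        omega
      rw [hfil, ← Finset.sum_mul, aux_telescope a ha1 N haN]
      have h0 : (a : ℚ) ≠ 0 := Nat.cast_ne_zero.mpr (by omega)
      field_simp
    rw [Multiset.map_congr rfl hinner, aux_linear X 1 (((N : ℚ) + 1)⁻¹)]
    ring
  -- termwise comparison of the two weighted sums
  have hle : ∀ v ∈ Finset.Icc 1 N,
      ((v : ℚ) * ((v : ℚ) + 1))⁻¹ * (t A v : ℚ)
        ≤ ((v : ℚ) * ((v : ℚ) + 1))⁻¹ * (t B v : ℚ) := by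
    intro v hv
    have hv1 : 1 ≤ v := (Finset.mem_Icc.mp hv).1
    have hpos : (0 : ℚ) ≤ ((v : ℚ) * ((v : ℚ) + 1))⁻¹ := by positivity
    exact mul_le_mul_of_nonneg_left (by exact_mod_cast hdom' v) hpos
  have hsums : ∑ v ∈ Finset.Icc 1 N, ((v : ℚ) * ((v : ℚ) + 1))⁻¹ * (t A v : ℚ)
      = ∑ v ∈ Finset.Icc 1 N, ((v : ℚ) * ((v : ℚ) + 1))⁻¹ * (t B v : ℚ) := by
    rw [hw A hA rfl, hw B hB hBsum, hcard, show A.sum = B.sum from hN.symm.trans hsum]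
  have hteq : ∀ v ∈ Finset.Icc 1 N, t A v = t B v := by
    intro v hv
    have hv1 : 1 ≤ v := (Finset.mem_Icc.mp hv).1
    have heq := (Finset.sum_eq_sum_iff_of_le hle).mp hsums v hv
    have hwne : ((v : ℚ) * ((v : ℚ) + 1))⁻¹ ≠ 0 := by positivity
    have := mul_left_cancel₀ hwne heq
    exact_mod_cast this
  have ht0 : ∀ X : Multiset ℕ, (∀ a ∈ X, 1 ≤ a) → t X 0 = 0 := by
    intro X hX1
    simp only [ht]
    apply Multiset.sum_eq_zero
    intro x hx
    obtain ⟨a, ha, rfl⟩ := Multiset.mem_map.mp hx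
    have := hX1 a ha
    rw [if_neg (by omega)]
  -- counts agree
  apply Multiset.ext.mpr
  intro a
  rcases Nat.eq_zero_or_pos a with rfl | hapos
  · rw [Multiset.count_eq_zero_of_notMem (fun h => by have := hA 0 h; omega),
      Multiset.count_eq_zero_of_notMem (fun h => by have := hB 0 h; omega)]
  rcases le_or_gt a N with haN | haN
  · obtain ⟨v, rfl⟩ : ∃ v, a = v + 1 := ⟨a - 1, by omega⟩
    have hstepA := aux_step A v
    have hstepB := aux_step B v
    have h1 : t A (v + 1) = t B (v + 1) := hteq _ (Finset.mem_Icc.mpr ⟨by omega, haN⟩)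
    have h0 : t A v = t B v := by
      rcases Nat.eq_zero_or_pos v with rfl | hv
      · rw [ht0 A hA, ht0 B hB]
      · exact hteq _ (Finset.mem_Icc.mpr ⟨hv, by omega⟩)
    simp only [ht] at h1 h0
    rw [hstepA, hstepB, h0] at h1
    have h2 := Nat.add_left_cancel h1
    exact Nat.eq_of_mul_eq_mul_left (by omega) h2
  · rw [Multiset.count_eq_zero_of_notMem, Multiset.count_eq_zero_of_notMem]
    · intro h
      have := aux_le_sum h
      omega
    · intro h
      have := aux_le_sum h
      omega

lemma aux_perm_exists {n : ℕ} (f g : Fin n → ℕ)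
    (h : Finset.univ.val.map f = Finset.univ.val.map g) :
    ∃ σ : Equiv.Perm (Fin n), ∀ j, f (σ j) = g j := by
  have huniv : (Finset.univ : Finset (Fin n)).val = (List.finRange n : Multiset (Fin n)) := by
    rw [Fin.univ_def]
  have hl : List.Perm (List.ofFn f) (List.ofFn g) := by
    rw [List.ofFn_eq_map, List.ofFn_eq_map, ← Multiset.coe_eq_coe, ← Multiset.map_coe,
      ← Multiset.map_coe, ← huniv]
    exact h
  have h2 : List.ofFn (f ∘ Tuple.sort f) = List.ofFn (g ∘ Tuple.sort g) :=
    List.Perm.eq_of_sortedLE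
      ((Tuple.monotone_sort f).sortedLE_ofFn) ((Tuple.monotone_sort g).sortedLE_ofFn)
      (((Tuple.sort f).ofFn_comp_perm f).trans (hl.trans ((Tuple.sort g).ofFn_comp_perm g).symm))
  have h3 : f ∘ Tuple.sort f = g ∘ Tuple.sort g := List.ofFn_injective h2
  refine ⟨(Tuple.sort g).symm.trans (Tuple.sort f), fun j => ?_⟩
  have h4 := congrFun h3 ((Tuple.sort g).symm j)
  simpa [Equiv.trans_apply, Function.comp] using h4

lemma aux_pTuple_map {m n : ℕ} (μ : Fin m → ℕ) (hsum : ∑ i, μ i = n) :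
    Finset.univ.val.map (pTuple μ n)
      = (Finset.univ.val.map μ).bind fun a => Multiset.replicate a a := by
  have huniv : ∀ k : ℕ, ∀ f : Fin k → ℕ,
      (Finset.univ.val.map f) = (↑(List.ofFn f) : Multiset ℕ) := by
    intro k f
    have hk : (Finset.univ : Finset (Fin k)).val = (List.finRange k : Multiset (Fin k)) := by
      rw [Fin.univ_def]
    rw [hk, Multiset.map_coe, ← List.ofFn_eq_map]
  set L : List ℕ := (List.ofFn μ).flatMap fun a => List.replicate a a with hL
  have hlen : L.length = n := by
    rw [hL, List.length_flatMap]
    simp only [List.map_ofFn]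
    rw [← hsum]
    have : ((fun a => (List.replicate a a).length) ∘ μ) = μ := by
      funext a
      simp
    rw [this, List.sum_ofFn]
  have hofn : List.ofFn (pTuple μ n) = L := by
    apply List.ext_getElem (by simp [hlen])
    intro i h1 h2
    simp only [List.getElem_ofFn]
    show L.getD i 0 = L[i]
    rw [List.getD_eq_getElem _ _ (by omega)]
  rw [huniv n (pTuple μ n), hofn, huniv m μ, hL, ← Multiset.coe_bind]
  rfl

lemma aux_bind_eq_sum {α β : Type*} (s : Finset α) (f : α → Multiset β) :
    s.val.bind f = ∑ r ∈ s, f r := rfl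

lemma aux_roots_map (F : Polynomial ℂ) (hF0 : F ≠ 0) :
    F.roots.map (fun r => rootMultiplicity r F)
      = (F.roots.toFinset.val.map fun r => rootMultiplicity r F).bind
          fun a => Multiset.replicate a a := by
  rw [Multiset.bind_map, aux_bind_eq_sum]
  conv_lhs => rw [← Multiset.toFinset_sum_count_nsmul_eq F.roots]
  rw [show Multiset.map (fun r => rootMultiplicity r F)
        = ⇑(Multiset.mapAddMonoidHom (fun r : ℂ => rootMultiplicity r F)) from rfl,
    map_sum]
  apply Finset.sum_congr rfl
  intro r _
  rw [Multiset.coe_mapAddMonoidHom, Multiset.map_nsmul, Multiset.map_singleton,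
    Multiset.nsmul_singleton, Polynomial.count_roots]

/-- Let `μ = (μ_1, …, μ_m)` be an `m`-partition of `n` and let `F ∈ ℂ[x]` have degree
`n`, exactly `m` distinct complex roots, and roots `α_1, …, α_n` listed with
multiplicity.  Then `mult F = μ` if and only if the permanent of the `n × n` matrix
whose `(i,j)` entry is `F^{(p_i)}(α_j) / p_i!` is nonzero. -/
theorem multEq_iff_permanent_ne_zero (n m : ℕ) (hm : 0 < m)
    (μ : Fin m → ℕ) (hmono : Antitone μ) (hpos : ∀ i, 1 ≤ μ i) (hsum : ∑ i, μ i = n)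
    (F : Polynomial ℂ) (hdeg : F.natDegree = n) (hndr : F.roots.toFinset.card = m)
    (α : Fin n → ℂ) (hroots : F.roots = Finset.univ.val.map α) :
    multEq F μ ↔
      Matrix.permanent
        (Matrix.of fun i j : Fin n =>
          (derivative^[pTuple μ n i] F).eval (α j) / ((pTuple μ n i).factorial : ℂ))
        ≠ 0 := by
  classical
  set P : Fin n → ℕ := pTuple μ n with hP
  set mlt : Fin n → ℕ := fun j => rootMultiplicity (α j) F with hmlt
  set A : Multiset ℕ := Finset.univ.val.map μ with hA
  set B : Multiset ℕ := F.roots.toFinset.val.map (fun r => rootMultiplicity r F) with hB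
  have hF0 : F ≠ 0 := by
    intro h
    rw [h] at hndr
    simp only [Polynomial.roots_zero, Multiset.toFinset_zero, Finset.card_empty] at hndr
    omega
  have hTA : Finset.univ.val.map P = A.bind fun a => Multiset.replicate a a :=
    aux_pTuple_map μ hsum
  have hTB : Finset.univ.val.map mlt = B.bind fun a => Multiset.replicate a a := by
    rw [hB, ← aux_roots_map F hF0, hroots, Multiset.map_map]
    rfl
  have hAcard : Multiset.card A = m := by simp [hA]
  have hBcard : Multiset.card B = m := by
    rw [hB, Multiset.card_map, ← Finset.card_def, hndr]
  have hAsum : A.sum = n := hsum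
  have hBsum : B.sum = n := by
    have h1 : B.sum = ∑ r ∈ F.roots.toFinset, rootMultiplicity r F := rfl
    have h2 : ∑ r ∈ F.roots.toFinset, rootMultiplicity r F
        = ∑ r ∈ F.roots.toFinset, F.roots.count r :=
      Finset.sum_congr rfl fun r _ => (Polynomial.count_roots F).symm
    rw [h1, h2, Multiset.toFinset_sum_count_eq, hroots, Multiset.card_map]
    simp
  have hApos : ∀ a ∈ A, 1 ≤ a := by
    intro a ha
    obtain ⟨i, _, rfl⟩ := Multiset.mem_map.mp ha
    exact hpos i
  have hBpos : ∀ a ∈ B, 1 ≤ a := by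
    intro a ha
    obtain ⟨r, hr, rfl⟩ := Multiset.mem_map.mp ha
    exact (Polynomial.rootMultiplicity_pos hF0).mpr
      (Polynomial.isRoot_of_mem_roots (Multiset.mem_toFinset.mp hr))
  have hzero : ∀ (i j : Fin n), P i < mlt j → (derivative^[P i] F).eval (α j) = 0 :=
    fun i j h => Polynomial.isRoot_iterate_derivative_of_lt_rootMultiplicity h
  have hne : ∀ j : Fin n, (derivative^[mlt j] F).eval (α j) ≠ 0 := by
    intro j
    show (derivative^[rootMultiplicity (α j) F] F).eval (α j) ≠ 0
    rw [Polynomial.eval_iterate_derivative_rootMultiplicity, nsmul_eq_mul]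
    exact mul_ne_zero (Nat.cast_ne_zero.mpr (Nat.factorial_ne_zero _))
      (Polynomial.eval_divByMonic_pow_rootMultiplicity_ne_zero (α j) hF0)
  set C : ℂ := ∏ j, (derivative^[mlt j] F).eval (α j) / ((mlt j).factorial : ℂ) with hC
  constructor
  · -- multEq → permanent ≠ 0
    intro hmu
    have hBA : B = A := hmu
    have hT : Finset.univ.val.map P = Finset.univ.val.map mlt := by
      rw [hTA, hTB, hBA]
    obtain ⟨σ₀, hσ₀⟩ := aux_perm_exists P mlt hT
    have hsums : ∑ i, P i = ∑ j, mlt j := congrArg Multiset.sum hT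
    have hterm : ∀ σ : Equiv.Perm (Fin n),
        (∏ j, (derivative^[P (σ j)] F).eval (α j) / ((P (σ j)).factorial : ℂ))
          = if ∀ j, P (σ j) = mlt j then C else 0 := by
      intro σ
      by_cases hσ : ∀ j, P (σ j) = mlt j
      · rw [if_pos hσ]
        exact Finset.prod_congr rfl fun j _ => by rw [hσ j]
      · rw [if_neg hσ]
        have hex : ∃ j, P (σ j) < mlt j := by
          by_contra hc
          push_neg at hc
          apply hσ
          intro j
          have hs : ∑ j, mlt j = ∑ j, P (σ j) := by
            rw [Equiv.sum_comp σ P, ← hsums]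
          exact ((Finset.sum_eq_sum_iff_of_le fun j _ => hc j).mp hs j (Finset.mem_univ j)).symm
        obtain ⟨j₀, hj₀⟩ := hex
        apply Finset.prod_eq_zero (Finset.mem_univ j₀)
        rw [hzero _ _ hj₀, zero_div]
    unfold Matrix.permanent
    have : ∀ σ : Equiv.Perm (Fin n),
        (∏ j, (Matrix.of fun i j : Fin n =>
          (derivative^[P i] F).eval (α j) / ((P i).factorial : ℂ)) (σ j) j)
          = if ∀ j, P (σ j) = mlt j then C else 0 := fun σ => hterm σ
    rw [Finset.sum_congr rfl fun σ _ => this σ, ← Finset.sum_filter, Finset.sum_const]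
    have hmem : σ₀ ∈ Finset.univ.filter (fun σ : Equiv.Perm (Fin n) => ∀ j, P (σ j) = mlt j) :=
      Finset.mem_filter.mpr ⟨Finset.mem_univ _, hσ₀⟩
    have hcard0 : (Finset.univ.filter
        (fun σ : Equiv.Perm (Fin n) => ∀ j, P (σ j) = mlt j)).card ≠ 0 :=
      Finset.card_ne_zero_of_mem hmem
    have hCne : C ≠ 0 := by
      rw [hC]
      exact Finset.prod_ne_zero_iff.mpr fun j _ =>
        div_ne_zero (hne j) (Nat.cast_ne_zero.mpr (Nat.factorial_ne_zero _))
    rw [nsmul_eq_mul]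
    exact mul_ne_zero (Nat.cast_ne_zero.mpr hcard0) hCne
  · -- permanent ≠ 0 → multEq
    intro hper
    have hex : ∃ σ : Equiv.Perm (Fin n),
        (∏ j, (Matrix.of fun i j : Fin n =>
          (derivative^[P i] F).eval (α j) / ((P i).factorial : ℂ)) (σ j) j) ≠ 0 := by
      by_contra hc
      push_neg at hc
      apply hper
      unfold Matrix.permanent
      exact Finset.sum_eq_zero fun σ _ => hc σ
    obtain ⟨σ, hσ⟩ := hex
    have hge : ∀ j, mlt j ≤ P (σ j) := by
      intro j
      by_contra hlt
      push_neg at hlt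
      apply hσ
      apply Finset.prod_eq_zero (Finset.mem_univ j)
      show (derivative^[P (σ j)] F).eval (α j) / ((P (σ j)).factorial : ℂ) = 0
      rw [hzero _ _ hlt, zero_div]
    have hdom : ∀ v : ℕ, (B.map fun a => if v ≤ a then a else 0).sum
        ≤ (A.map fun a => if v ≤ a then a else 0).sum := by
      intro v
      rw [aux_card_bind v mlt B hTB, aux_card_bind v P A hTA]
      apply Finset.card_le_card_of_injOn (σ : Fin n → Fin n)
      · intro j hj
        simp only [Finset.coe_filter, Set.mem_setOf_eq, Finset.mem_coe, Finset.mem_filter, Finset.mem_univ, true_and] at hj ⊢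
        exact le_trans hj (hge j)
      · exact σ.injective.injOn
    have hkey := aux_key A B hApos hBpos (by rw [hAcard, hBcard]) (by rw [hAsum, hBsum]) hdom
    exact hkey.symm
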